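/- Let Q be a real inner product space of dimension q = 2m (m ≥ 2) with an orthogonal almost complex structure J. Suppose T is a map satisfying (q+1)·T(E_a,E_b)E_c = H_{ab}E_c + H_{ac}E_b − H_{ba}E_c − H_{bc}E_a for a q×q real matrix H, and T(JX,JY) = T(X,Y) for all X,Y. Then (q−2)·Σ_a H_{aa} = 0; in particular since q > 2, the trace Σ_a H_{aa} = 0. -/

import Mathlib

open scoped RealInnerProductSpace

/-- On a real inner product space of dimension `q = 2m` (`m ≥ 2`) with an
orthogonal almost complex structure `J`, if a trilinear map `T` satisfies
`(q+1)·T(E_a,E_b)E_c = H_{ab}E_c + H_{ac}E_b − H_{ba}E_c − H_{bc}E_a` for a real matrix `H`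
and `T(JX,JY) = T(X,Y)`, then `(q−2)·Σ_a H_{aa} = 0`; in particular since `q > 2`,
the trace `Σ_a H_{aa} = 0`. -/
theorem stmt1
    {V : Type*} [NormedAddCommGroup V] [InnerProductSpace ℝ V]
    (m q : ℕ) (hq : q = 2 * m) (hm : 2 ≤ m) [FiniteDimensional ℝ V]
    (hdim : Module.finrank ℝ V = q)
    (E : OrthonormalBasis (Fin q) ℝ V)
    (J : V →ₗ[ℝ] V)
    (hJ2 : ∀ X : V, J (J X) = -X)
    (hJg : ∀ X Y : V, ⟪J X, J Y⟫ = ⟪X, Y⟫)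
    (T : V →ₗ[ℝ] V →ₗ[ℝ] V →ₗ[ℝ] V)
    (H : Fin q → Fin q → ℝ)
    (hT : ∀ a b c : Fin q,
      ((q : ℝ) + 1) • T (E a) (E b) (E c) =
        H a b • E c + H a c • E b - H b a • E c - H b c • E a)
    (hTJ : ∀ X Y Z : V, T (J X) (J Y) Z = T X Y Z) :
    ((q : ℝ) - 2) * (∑ a : Fin q, H a a) = 0 ∧ ∑ a : Fin q, H a a = 0 := by
  classical
  -- orthonormality of E
  have hEE : ∀ i j : Fin q, ⟪E i, E j⟫ = if i = j then (1:ℝ) else 0 :=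
    orthonormal_iff_ite.mp E.orthonormal
  -- J moves across the inner product with a sign
  have hXJ : ∀ X Y : V, ⟪X, J Y⟫ = -⟪J X, Y⟫ := by
    intro X Y
    rw [← hJg X (J Y), hJ2, inner_neg_right]
  set jm : Fin q → Fin q → ℝ := fun p b => ⟪E p, J (E b)⟫ with hjm
  set t : Fin q → Fin q → Fin q → Fin q → ℝ :=
    fun a b c d => ⟪T (E a) (E b) (E c), E d⟫ with ht
  -- diagonal of jm vanishes
  have hjdiag : ∀ b : Fin q, jm b b = 0 := by
    intro b
    have h1 : jm b b = -⟪J (E b), E b⟫ := hXJ (E b) (E b)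
    have h2 : ⟪J (E b), E b⟫ = jm b b := real_inner_comm _ _
    rw [h2] at h1; linarith
  -- row orthonormality
  have hrow : ∀ p r : Fin q, (∑ b, jm p b * jm r b) = if p = r then (1:ℝ) else 0 := by
    intro p r
    have key : ∀ b : Fin q, jm p b * jm r b = ⟪J (E p), E b⟫ * ⟪E b, J (E r)⟫ := by
      intro b
      have h1 : jm p b = -⟪J (E p), E b⟫ := hXJ _ _
      have h2 : jm r b = -⟪E b, J (E r)⟫ := by
        have h3 : jm r b = -⟪J (E r), E b⟫ := hXJ _ _
        rw [h3, real_inner_comm]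
      rw [h1, h2]; ring
    rw [Finset.sum_congr rfl (fun b _ => key b), E.sum_inner_mul_inner, hJg, hEE]
  -- column orthonormality
  have hcol : ∀ a b : Fin q, (∑ p, jm p a * jm p b) = if a = b then (1:ℝ) else 0 := by
    intro a b
    have key : ∀ p : Fin q, jm p a * jm p b = ⟪J (E a), E p⟫ * ⟪E p, J (E b)⟫ := by
      intro p
      have h1 : jm p a = ⟪J (E a), E p⟫ := real_inner_comm _ _
      rw [h1]
    rw [Finset.sum_congr rfl (fun p _ => key p), E.sum_inner_mul_inner, hJg, hEE]
  -- mixed contraction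
  have hmix : ∀ p b : Fin q,
      (∑ a, jm p a * jm a b) = -(if p = b then (1:ℝ) else 0) := by
    intro p b
    have key : ∀ a : Fin q, jm p a * jm a b = -(⟪J (E p), E a⟫ * ⟪E a, J (E b)⟫) := by
      intro a
      have h1 : jm p a = -⟪J (E p), E a⟫ := hXJ _ _
      rw [h1]; ring
    rw [Finset.sum_congr rfl (fun a _ => key a), Finset.sum_neg_distrib,
      E.sum_inner_mul_inner, hJg, hEE]
  -- scalar form of hT
  have hT' : ∀ a b c d : Fin q,
      ((q:ℝ) + 1) * t a b c d =
        H a b * (if c = d then (1:ℝ) else 0) + H a c * (if b = d then (1:ℝ) else 0)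
        - H b a * (if c = d then (1:ℝ) else 0) - H b c * (if a = d then (1:ℝ) else 0) := by
    intro a b c d
    have h := congrArg (fun v : V => ⟪v, E d⟫) (hT a b c)
    simpa [t, real_inner_smul_left, inner_add_left, inner_sub_left, hEE] using h
  -- expansion of inner with J (E b)
  have hexp : ∀ (v : V) (b : Fin q), ⟪v, J (E b)⟫ = ∑ r, ⟪v, E r⟫ * jm r b := by
    intro v b
    exact (E.sum_inner_mul_inner v (J (E b))).symm
  -- expanding T with J in the second slot
  have hTsnd : ∀ a b c : Fin q,
      T (E a) (J (E b)) (E c) = ∑ p, jm p b • T (E a) (E p) (E c) := by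
    intro a b c
    conv_lhs => rw [← E.sum_repr' (J (E b))]
    simp [jm]
  -- expanding T with J in the first slot
  have hTfst : ∀ a b c : Fin q,
      T (J (E a)) (E b) (E c) = ∑ p, jm p a • T (E p) (E b) (E c) := by
    intro a b c
    conv_lhs => rw [← E.sum_repr' (J (E a))]
    simp [jm]
  -- J-invariance consequence
  have hswapJ : ∀ a b c : Fin q,
      T (E a) (J (E b)) (E c) = -(T (J (E a)) (E b) (E c)) := by
    intro a b c
    have h := hTJ (J (E a)) (E b) (E c)
    rw [hJ2] at h
    simp only [map_neg, LinearMap.neg_apply] at h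
    rw [← h, neg_neg]
  have htapp : ∀ a b c d : Fin q, ⟪T (E a) (E b) (E c), E d⟫ = t a b c d := fun _ _ _ _ => rfl
  have hjapp : ∀ p b : Fin q, ⟪E p, J (E b)⟫ = jm p b := fun _ _ => rfl
  -- Step: expansion of the J-trace, second-slot version
  have hstep : ∀ a b : Fin q, ⟪T (E a) (J (E b)) (E a), J (E b)⟫
      = ∑ p, ∑ r, (jm p b * jm r b) * t a p a r := by
    intro a b
    rw [hTsnd a b a, sum_inner]
    refine Finset.sum_congr rfl fun p _ => ?_
    rw [real_inner_smul_left, hexp, Finset.mul_sum]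
    refine Finset.sum_congr rfl fun r _ => ?_
    rw [htapp]; ring
  -- Step: expansion of the J-trace, first-slot version (using J-invariance)
  have hstep2 : ∀ a b : Fin q, ⟪T (E a) (J (E b)) (E a), J (E b)⟫
      = -(∑ p, ∑ r, (jm p a * jm r b) * t p b a r) := by
    intro a b
    rw [hswapJ a b a, hTfst a b a, inner_neg_left, sum_inner, neg_inj]
    refine Finset.sum_congr rfl fun p _ => ?_
    rw [real_inner_smul_left, hexp, Finset.mul_sum]
    refine Finset.sum_congr rfl fun r _ => ?_
    rw [htapp]; ring
  -- collapse of the second-slot expansion back to the trace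
  have hcollapse : ∀ a : Fin q,
      ∑ b, ∑ p, ∑ r, (jm p b * jm r b) * t a p a r = ∑ b, t a b a b := by
    intro a
    rw [Finset.sum_comm]
    refine Finset.sum_congr rfl fun p _ => ?_
    rw [Finset.sum_comm]
    have key : ∀ r : Fin q, (∑ b, (jm p b * jm r b) * t a p a r)
        = (if p = r then (1:ℝ) else 0) * t a p a r := by
      intro r
      rw [← Finset.sum_mul, hrow]
    rw [Finset.sum_congr rfl fun r _ => key r]
    simp
  -- hence the trace equals minus the first-slot expansion
  have hGJ : ∀ a : Fin q, ∑ b, t a b a b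
      = -(∑ b, ∑ p, ∑ r, (jm p a * jm r b) * t p b a r) := by
    intro a
    rw [← hcollapse a, ← Finset.sum_neg_distrib]
    exact Finset.sum_congr rfl fun b _ => (hstep a b).symm.trans (hstep2 a b)
  -- Claim A: direct evaluation of the trace
  have hA : ∀ a : Fin q, ((q:ℝ) + 1) * (∑ b, t a b a b) = ((q:ℝ) - 1) * H a a := by
    intro a
    rw [Finset.mul_sum, Finset.sum_congr rfl fun b _ => hT' a b a b]
    simp [Finset.sum_add_distrib, Finset.sum_sub_distrib, mul_ite, Finset.sum_ite_eq,
      Finset.sum_ite_eq', Finset.card_univ]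
    ring
  -- Claim B: evaluation through the J-invariance
  have hB : ∀ a : Fin q, ((q:ℝ) + 1) * (∑ b, t a b a b)
      = H a a - ∑ b, ∑ p, (jm p a * jm a b) * (H p b - H b p) := by
    intro a
    rw [hGJ a]
    have expand : ∀ b p : Fin q,
        ∑ r, ((q:ℝ) + 1) * ((jm p a * jm r b) * t p b a r)
        = (jm p a * jm a b) * (H p b - H b p) - (jm p a * jm p b) * H b a := by
      intro b p
      have key : ∀ r : Fin q, ((q:ℝ) + 1) * ((jm p a * jm r b) * t p b a r)
          = (jm p a * jm r b) * (((q:ℝ) + 1) * t p b a r) := fun r => by ring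
      rw [Finset.sum_congr rfl fun r _ => (key r).trans (by rw [hT' p b a r])]
      simp [mul_add, mul_sub, mul_ite, Finset.sum_add_distrib, Finset.sum_sub_distrib,
        Finset.sum_ite_eq, Finset.sum_ite_eq', hjdiag]
    calc ((q:ℝ) + 1) * -(∑ b, ∑ p, ∑ r, (jm p a * jm r b) * t p b a r)
        = -(∑ b, ∑ p, ∑ r, ((q:ℝ) + 1) * ((jm p a * jm r b) * t p b a r)) := by
          rw [mul_neg, Finset.mul_sum]
          congr 1
          refine Finset.sum_congr rfl fun b _ => ?_
          rw [Finset.mul_sum]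
          refine Finset.sum_congr rfl fun p _ => ?_
          rw [Finset.mul_sum]
      _ = -(∑ b, ∑ p, ((jm p a * jm a b) * (H p b - H b p) - (jm p a * jm p b) * H b a)) := by
          congr 1
          refine Finset.sum_congr rfl fun b _ => ?_
          exact Finset.sum_congr rfl fun p _ => expand b p
      _ = (∑ b, (∑ p, jm p a * jm p b) * H b a)
            - ∑ b, ∑ p, (jm p a * jm a b) * (H p b - H b p) := by
          rw [Finset.sum_congr rfl fun b _ => Finset.sum_sub_distrib (s := Finset.univ) _ _]
          rw [Finset.sum_sub_distrib]
          rw [Finset.sum_congr rfl fun b _ => (Finset.sum_mul ..).symm]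
          ring
      _ = H a a - ∑ b, ∑ p, (jm p a * jm a b) * (H p b - H b p) := by
          congr 1
          rw [Finset.sum_congr rfl fun b _ => by rw [hcol a b]]
          simp
  -- the correction term sums to zero over a
  have hS : ∑ a, ∑ b, ∑ p, (jm p a * jm a b) * (H p b - H b p) = 0 := by
    rw [Finset.sum_comm]
    rw [Finset.sum_congr rfl fun b _ => Finset.sum_comm ..]
    have key : ∀ b p : Fin q, (∑ a, (jm p a * jm a b) * (H p b - H b p))
        = -((if p = b then (1:ℝ) else 0) * (H p b - H b p)) := by
      intro b p
      rw [← Finset.sum_mul, hmix, neg_mul]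
    rw [Finset.sum_congr rfl fun b _ => Finset.sum_congr rfl fun p _ => key b p]
    simp
  -- combine
  have hAB : ((q:ℝ) - 1) * (∑ a, H a a) = ∑ a, H a a := by
    have h1 : ∑ a, ((q:ℝ) + 1) * (∑ b, t a b a b) = ∑ a, ((q:ℝ) - 1) * H a a :=
      Finset.sum_congr rfl fun a _ => hA a
    have h2 : ∑ a, ((q:ℝ) + 1) * (∑ b, t a b a b)
        = ∑ a, (H a a - ∑ b, ∑ p, (jm p a * jm a b) * (H p b - H b p)) :=
      Finset.sum_congr rfl fun a _ => hB a
    rw [h2] at h1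
    rw [Finset.sum_sub_distrib, hS, sub_zero] at h1
    rw [← Finset.mul_sum] at h1
    linarith [h1]
  have hq4 : (4:ℝ) ≤ (q:ℝ) := by
    have : (4:ℕ) ≤ q := by omega
    exact_mod_cast this
  have htr : ∑ a, H a a = 0 := by
    have h : ((q:ℝ) - 2) * (∑ a, H a a) = 0 := by linarith [hAB]
    have hne : (q:ℝ) - 2 ≠ 0 := by linarith
    exact (mul_eq_zero.mp h).resolve_left hne
  exact ⟨by rw [htr, mul_zero], htr⟩
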